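/- Consider the transversal Russian cards problem: X is a deck of av cards partitioned into a piles each of size v, with a > c ≥ 1. Let 𝔊 be a finite collection of announcements (sets of transversals of the piles) such that every transversal of the piles belongs to at least one member of 𝔊, and such that no member of 𝔊 contains two distinct transversals H, H' with |H ∩ H'| ≥ a − c (i.e., each announcement is informative for Bob). Then |𝔊| ≥ v^c. -/

import Mathlib

open Finset

/-- Theorem (lower bound on the number of announcements in the transversal
Russian cards problem): if every transversal of the piles lies in some member of
the informative strategy `𝔊`, then `𝔊` has at least `v^c` announcements. -/
theorem stmt_16 {α : Type*} [DecidableEq α] (X : Finset α) (𝒢 : Finset (Finset α))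
    (a v c : ℕ)
    (hv : 2 ≤ v) (hc1 : 1 ≤ c) (hca : c < a)
    (h𝒢card : 𝒢.card = a)
    (hGsize : ∀ G ∈ 𝒢, G.card = v)
    (hGdisj : ∀ G ∈ 𝒢, ∀ G' ∈ 𝒢, G ≠ G' → Disjoint G G')
    (hGunion : X = 𝒢.biUnion id)
    (𝔊 : Finset (Finset (Finset α)))
    (hmem : ∀ 𝒜 ∈ 𝔊, ∀ H ∈ 𝒜, H ⊆ X ∧ ∀ G ∈ 𝒢, (H ∩ G).card = 1)
    (hcover : ∀ T : Finset α, T ⊆ X → (∀ G ∈ 𝒢, (T ∩ G).card = 1) →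
      ∃ 𝒜 ∈ 𝔊, T ∈ 𝒜)
    (hinf : ∀ 𝒜 ∈ 𝔊, ¬ ∃ H ∈ 𝒜, ∃ H' ∈ 𝒜, H ≠ H' ∧ a - c ≤ (H ∩ H').card) :
    v ^ c ≤ 𝔊.card := by
  classical
  have hv0 : 0 < v := by omega
  have h𝒢ne : 𝒢.Nonempty := Finset.card_pos.mp (by omega)
  obtain ⟨G₀, hG₀⟩ := h𝒢ne
  obtain ⟨x₀, hx₀⟩ : G₀.Nonempty :=
    Finset.card_pos.mp (by rw [hGsize G₀ hG₀]; omega)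
  -- a fixed subset of a - c piles
  obtain ⟨S, hS𝒢, hScard⟩ :=
    Finset.exists_subset_card_eq (show a - c ≤ 𝒢.card by omega)
  -- the "chosen element of H ∩ G" function
  set d : Finset α → Finset α → α :=
    fun H G => if h : (H ∩ G).Nonempty then h.choose else x₀ with hd
  have hdmem : ∀ H G : Finset α, (H ∩ G).Nonempty → d H G ∈ H ∩ G := by
    intro H G h
    simp only [hd, dif_pos h]
    exact h.choose_spec
  -- Step 1: each announcement has at most v ^ (a - c) hands
  have key : ∀ 𝒜 ∈ 𝔊, 𝒜.card ≤ v ^ (a - c) := by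
    intro 𝒜 h𝒜
    have hpi : (S.pi fun G => G).card = v ^ (a - c) := by
      rw [Finset.card_pi,
        Finset.prod_congr rfl (fun G hG => hGsize G (hS𝒢 hG)),
        Finset.prod_const, hScard]
    rw [← hpi]
    have hHmem : ∀ H ∈ 𝒜, ∀ G ∈ S, d H G ∈ H ∩ G := by
      intro H hH G hG
      apply hdmem
      apply Finset.card_pos.mp
      rw [(hmem 𝒜 h𝒜 H hH).2 G (hS𝒢 hG)]; omega
    apply Finset.card_le_card_of_injOn (fun H => fun G (_ : G ∈ S) => d H G)
    · intro H hH
      rw [Finset.mem_coe, Finset.mem_pi]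
      intro G hG
      exact (Finset.mem_inter.mp (hHmem H hH G hG)).2
    · intro H hH H' hH' heq
      by_contra hne
      apply hinf 𝒜 h𝒜
      refine ⟨H, hH, H', hH', hne, ?_⟩
      have heq' : ∀ G ∈ S, d H G = d H' G := fun G hG =>
        congrFun (congrFun heq G) hG
      -- the chosen elements give a - c distinct common cards
      have hsub : S.image (d H) ⊆ H ∩ H' := by
        intro x hx
        obtain ⟨G, hG, rfl⟩ := Finset.mem_image.mp hx
        have h1 := Finset.mem_inter.mp (hHmem H hH G hG)
        have h2 := Finset.mem_inter.mp (hHmem H' hH' G hG)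
        rw [Finset.mem_inter]
        exact ⟨h1.1, heq' G hG ▸ h2.1⟩
      have hinj : Set.InjOn (d H) S := by
        intro G hG G' hG' hGG
        simp only [Finset.mem_coe] at hG hG'
        by_contra hne'
        have h1 := (Finset.mem_inter.mp (hHmem H hH G hG)).2
        have h2 := (Finset.mem_inter.mp (hHmem H hH G' hG')).2
        rw [hGG] at h1
        exact Finset.disjoint_left.mp
          (hGdisj G (hS𝒢 hG) G' (hS𝒢 hG') hne') h1 h2
      calc a - c = S.card := hScard.symm
        _ = (S.image (d H)).card := (Finset.card_image_of_injOn hinj).symm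
        _ ≤ (H ∩ H').card := Finset.card_le_card hsub
  -- Step 2: there are exactly v ^ a transversals, all covered by 𝔊
  set 𝒯 : Finset (Finset α) := 𝔊.biUnion id with h𝒯
  have hlow : v ^ a ≤ 𝒯.card := by
    have hpi : (𝒢.pi fun G => G).card = v ^ a := by
      rw [Finset.card_pi, Finset.prod_congr rfl hGsize,
        Finset.prod_const, h𝒢card]
    rw [← hpi]
    set ι : (∀ G ∈ 𝒢, α) → Finset α :=
      fun f => 𝒢.attach.image (fun G => f G.1 G.2) with hι
    have hιinter : ∀ f ∈ 𝒢.pi fun G => G, ∀ G₁, (hG₁ : G₁ ∈ 𝒢) →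
        ι f ∩ G₁ = {f G₁ hG₁} := by
      intro f hf G₁ hG₁
      have hfG : ∀ G : Finset α, ∀ hG : G ∈ 𝒢, f G hG ∈ G :=
        Finset.mem_pi.mp hf
      ext x
      simp only [Finset.mem_inter, Finset.mem_singleton, hι,
        Finset.mem_image, Finset.mem_attach, true_and, Subtype.exists]
      constructor
      · rintro ⟨⟨G, hG, rfl⟩, hxG₁⟩
        have : G = G₁ := by
          by_contra hne'
          exact Finset.disjoint_left.mp (hGdisj G hG G₁ hG₁ hne')
            (hfG G hG) hxG₁
        subst this; rfl
      · rintro rfl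
        exact ⟨⟨G₁, hG₁, rfl⟩, hfG G₁ hG₁⟩
    apply Finset.card_le_card_of_injOn ι
    · intro f hf
      have hfG : ∀ G : Finset α, ∀ hG : G ∈ 𝒢, f G hG ∈ G :=
        Finset.mem_pi.mp hf
      have hsubX : ι f ⊆ X := by
        intro x hx
        simp only [hι, Finset.mem_image, Finset.mem_attach, true_and,
          Subtype.exists] at hx
        obtain ⟨G, hG, rfl⟩ := hx
        rw [hGunion]
        exact Finset.mem_biUnion.mpr ⟨G, hG, hfG G hG⟩
      have hcard1 : ∀ G ∈ 𝒢, (ι f ∩ G).card = 1 := by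
        intro G hG
        rw [hιinter f hf G hG, Finset.card_singleton]
      obtain ⟨𝒜, h𝒜, hT𝒜⟩ := hcover (ι f) hsubX hcard1
      exact Finset.mem_biUnion.mpr ⟨𝒜, h𝒜, hT𝒜⟩
    · intro f hf g hg heq
      funext G hG
      have h1 : f G hG ∈ ι g ∩ G := by
        rw [← heq, hιinter f hf G hG]
        exact Finset.mem_singleton_self _
      rw [hιinter g hg G hG] at h1
      exact Finset.mem_singleton.mp h1
  -- Step 3: combine
  have hsum : 𝒯.card ≤ 𝔊.card * v ^ (a - c) := by
    calc 𝒯.card ≤ ∑ 𝒜 ∈ 𝔊, (id 𝒜).card := Finset.card_biUnion_le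
      _ ≤ ∑ _𝒜 ∈ 𝔊, v ^ (a - c) := Finset.sum_le_sum key
      _ = 𝔊.card * v ^ (a - c) := by rw [Finset.sum_const, smul_eq_mul]
  have hpowsplit : v ^ a = v ^ (a - c) * v ^ c := by
    rw [← pow_add]; congr 1; omega
  have : v ^ (a - c) * v ^ c ≤ v ^ (a - c) * 𝔊.card := by
    rw [← hpowsplit]
    calc v ^ a ≤ 𝒯.card := hlow
      _ ≤ 𝔊.card * v ^ (a - c) := hsum
      _ = v ^ (a - c) * 𝔊.card := mul_comm _ _
  exact Nat.le_of_mul_le_mul_left this (pow_pos hv0 _)
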